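/- Let 𝔤 be a finite-dimensional real Lie algebra such that the ideal 𝔤^∞ := ⋂_{j≥1} 𝔤^j is abelian, and let 𝔥 ⊆ 𝔤 be a Cartan subalgebra. Then 𝔤^∞ ∩ 𝔥 = {0} and 𝔤^∞ + 𝔥 = 𝔤; that is, 𝔤 decomposes as the vector-space direct sum of the abelian ideal 𝔤^∞ and the Cartan subalgebra 𝔥. -/

import Mathlib

/-- If `𝔤^∞ := ⋂_{j≥1} 𝔤^j` is abelian and `𝔥` is a Cartan subalgebra of the
finite-dimensional real Lie algebra `𝔤`, then `𝔤 = 𝔤^∞ ∔ 𝔥` as vector spaces. -/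
theorem stmt1 (L : Type*) [LieRing L] [LieAlgebra ℝ L] [Module.Finite ℝ L]
    (habelian : ∀ x ∈ (⨅ k, LieModule.lowerCentralSeries ℝ L L k),
      ∀ y ∈ (⨅ k, LieModule.lowerCentralSeries ℝ L L k), ⁅x, y⁆ = 0)
    (H : LieSubalgebra ℝ L) (hH : H.IsCartanSubalgebra) :
    (∀ x, x ∈ (⨅ k, LieModule.lowerCentralSeries ℝ L L k) → x ∈ H → x = 0) ∧
      (∀ x : L, ∃ y ∈ (⨅ k, LieModule.lowerCentralSeries ℝ L L k), ∃ z ∈ H, x = y + z) := by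
  haveI := hH
  set I : LieSubmodule ℝ L L := ⨅ k, LieModule.lowerCentralSeries ℝ L L k with hIdef
  set F : LieSubmodule ℝ H L := LieModule.posFittingComp ℝ H L with hFdef
  have hcompl : IsCompl H.toLieSubmodule F := by
    rw [← LieAlgebra.rootSpace_zero_eq ℝ L H]
    exact LieModule.isCompl_genWeightSpace_zero_posFittingComp ℝ H L
  -- any element decomposes
  have hdec : ∀ x : L, ∃ h ∈ H, ∃ f ∈ F, x = h + f := by
    intro x
    have hx : x ∈ H.toLieSubmodule ⊔ F := by
      rw [hcompl.codisjoint.eq_top]; trivial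
    obtain ⟨y, hy, z, hz, hyz⟩ := (LieSubmodule.mem_sup _ _ _).mp hx
    exact ⟨y, hy, z, hz, hyz.symm⟩
  have hdisj : ∀ x : L, x ∈ H → x ∈ F → x = 0 := by
    intro x hxH hxF
    have hx : x ∈ H.toLieSubmodule ⊓ F := ⟨hxH, hxF⟩
    rw [hcompl.inf_eq_bot] at hx
    exact hx
  -- lcs over H ≤ lcs over L
  have lcsHL : ∀ k (x : L), x ∈ LieModule.lowerCentralSeries ℝ H L k →
      x ∈ LieModule.lowerCentralSeries ℝ L L k := by
    intro k
    induction k with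
    | zero => intro x _; simp
    | succ k ih =>
      intro x hx
      rw [LieModule.lowerCentralSeries_succ] at hx ⊢
      rw [← LieSubmodule.mem_toSubmodule, LieSubmodule.lieIdeal_oper_eq_linear_span] at hx
      induction hx using Submodule.span_induction with
      | mem m hm =>
        obtain ⟨⟨z, -⟩, ⟨n, hn⟩, rfl⟩ := hm
        rw [LieSubalgebra.coe_bracket_of_module]
        exact LieSubmodule.lie_mem_lie (LieSubmodule.mem_top _) (ih n hn)
      | zero => exact zero_mem _
      | add a b _ _ ha hb => exact add_mem ha hb
      | smul t a _ ha => exact Submodule.smul_mem _ t ha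
  -- F ⊆ I
  have hFI : ∀ x ∈ F, x ∈ I := by
    intro x hx
    rw [hIdef, LieSubmodule.mem_iInf]
    intro k
    exact lcsHL k x (LieSubmodule.mem_iInf _ |>.mp
      (LieModule.posFittingComp_le_iInf_lowerCentralSeries ℝ H L hx) k)
  -- stabilization : I = ⁅⊤, I⁆
  have hstab : I = ⁅(⊤ : LieIdeal ℝ L), I⁆ := by
    obtain ⟨k, hk⟩ := Filter.eventually_atTop.mp
      (LieModule.eventually_iInf_lowerCentralSeries_eq ℝ L L)
    rw [hIdef]
    conv_lhs => rw [hk (k+1) (by omega)]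
    rw [LieModule.lowerCentralSeries_succ, ← hk k le_rfl]
  -- the key induction
  have key : ∀ n, ∀ a ∈ I, a ∈
      (((LieModule.lowerCentralSeries ℝ H H n : LieSubmodule ℝ H H).toSubmodule.map
        H.toSubmodule.subtype) ⊔ (F : Submodule ℝ L)) := by
    intro n
    induction n with
    | zero =>
      intro a _
      have htop := hcompl.codisjoint.eq_top
      rw [← LieSubmodule.toSubmodule_inj, LieSubmodule.sup_toSubmodule,
        LieSubalgebra.coe_toLieSubmodule, LieSubmodule.top_toSubmodule] at htop
      simp only [LieModule.lowerCentralSeries_zero]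
      rw [show ((⊤ : LieSubmodule ℝ H H).toSubmodule) = ⊤ from rfl, Submodule.map_top,
        Submodule.range_subtype, htop]
      trivial
    | succ n ih =>
      intro a ha
      rw [hstab, ← LieSubmodule.mem_toSubmodule, LieSubmodule.lieIdeal_oper_eq_linear_span] at ha
      induction ha using Submodule.span_induction with
      | mem m hm =>
        obtain ⟨zz, cc, rfl⟩ := hm
        obtain ⟨h, hh, f, hf, hz⟩ := hdec (zz : L)
        obtain ⟨b', hb', g, hg, hcg⟩ := Submodule.mem_sup.mp (ih (cc : L) cc.2)
        obtain ⟨b, hb, rfl⟩ := hb'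
        have e : ⁅(zz : L), (cc : L)⁆
            = ⁅h, (b : L)⁆ + (⁅h, g⁆ + (-⁅(b : L), f⁆ + -⁅g, f⁆)) := by
          rw [hz, ← hcg]
          show ⁅h + f, (b : L) + g⁆ = _
          simp only [add_lie, lie_add]
          rw [← lie_skew (b : L) f, ← lie_skew g f]
          abel
        rw [e]
        have h1 : ⁅h, (b : L)⁆ ∈ ((LieModule.lowerCentralSeries ℝ H H (n+1) :
            LieSubmodule ℝ H H).toSubmodule.map H.toSubmodule.subtype) := by
          refine ⟨⁅(⟨h, hh⟩ : H), b⁆, ?_, rfl⟩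
          rw [LieModule.lowerCentralSeries_succ]
          exact LieSubmodule.lie_mem_lie (LieSubmodule.mem_top _) hb
        have h2 : ⁅h, g⁆ ∈ F := by
          have := F.lie_mem (x := (⟨h, hh⟩ : H)) hg
          rwa [LieSubalgebra.coe_bracket_of_module] at this
        have h3 : ⁅(b : L), f⁆ ∈ F := by
          have := F.lie_mem (x := b) hf
          rwa [LieSubalgebra.coe_bracket_of_module] at this
        have h4 : ⁅g, f⁆ = 0 := habelian g (hFI g hg) f (hFI f hf)
        exact Submodule.add_mem_sup h1 (by
          rw [h4, neg_zero, add_zero]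
          exact F.toSubmodule.add_mem h2 (F.toSubmodule.neg_mem h3))
      | zero => exact Submodule.zero_mem _
      | add a b _ _ ha hb => exact Submodule.add_mem _ ha hb
      | smul t a _ ha => exact Submodule.smul_mem _ t ha
  constructor
  · intro x hxI hxH
    have hmem : ∀ n, (⟨x, hxH⟩ : H) ∈ LieModule.lowerCentralSeries ℝ H H n := by
      intro n
      obtain ⟨b', hb', g, hg, hx⟩ := Submodule.mem_sup.mp (key n x hxI)
      obtain ⟨b, hb, rfl⟩ := hb'
      have hgH : g ∈ H := by
        have hg' : g = x - (b : L) := by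
          rw [← hx]; exact (add_sub_cancel_left _ _).symm
        rw [hg']
        exact H.sub_mem hxH b.2
      have hg0 : g = 0 := hdisj g hgH hg
      have hbx : (b : L) = x := by rw [← hx, hg0, add_zero]; rfl
      have hb' : b = (⟨x, hxH⟩ : H) := Subtype.ext hbx
      rwa [← hb']
    obtain ⟨k, hk⟩ :=
      LieModule.IsNilpotent.nilpotent ℝ H H
    have hx0 := hmem k
    rw [hk] at hx0
    exact congrArg Subtype.val ((LieSubmodule.mem_bot _).mp hx0)
  · intro x
    obtain ⟨h, hh, f, hf, rfl⟩ := hdec x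
    exact ⟨f, hFI f hf, h, hh, (add_comm h f)⟩
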